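/- Let 0 < x₀ < 1/2 and h ≥ 1 with h·x₀ < 1/2, integers k ≥ 2, 1 ≤ l ≤ k, and p(x) = ∑_{j=⌈k/2⌉}^{k} l·(2j/k − 1)·C(k,j)·(1−x)^j·x^{k−j}. Then x₀·(h−1)/p(h·x₀) ≤ x₀·(h−1) / (l·((h x₀)^k + 1 − 2 h x₀)). -/

import Mathlib

open Finset

lemma binom_one (k : ℕ) (y : ℝ) :
    ∑ j ∈ Finset.range (k+1), (k.choose j : ℝ) * y ^ j * (1 - y) ^ (k - j) = 1 := by
  have := congrArg (Polynomial.eval y) (bernsteinPolynomial.sum ℝ k)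
  simpa [bernsteinPolynomial, Polynomial.eval_finset_sum] using this

lemma binom_j (k : ℕ) (y : ℝ) :
    ∑ j ∈ Finset.range (k+1), (j : ℝ) * (k.choose j : ℝ) * y ^ j * (1 - y) ^ (k - j)
      = k * y := by
  have := congrArg (Polynomial.eval y) (bernsteinPolynomial.sum_smul ℝ k)
  simpa [bernsteinPolynomial, Polynomial.eval_finset_sum, mul_assoc] using this

lemma tail_ge (k : ℕ) (hk : 2 ≤ k) (x : ℝ) (hx0 : 0 < x) (hx : x < 1/2) :
    x ^ k + 1 - 2 * x ≤
      ∑ j ∈ Finset.Icc ((k + 1) / 2) k,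
        (2 * (j : ℝ) / k - 1) * (k.choose j : ℝ) * (1 - x) ^ j * x ^ (k - j) := by
  set m := (k + 1) / 2 with hm
  have hk0 : (k : ℝ) ≠ 0 := by positivity
  have hx1 : (0:ℝ) < 1 - x := by linarith
  set f : ℕ → ℝ := fun j => (2 * (j : ℝ) / k - 1) * (k.choose j : ℝ) * (1 - x) ^ j * x ^ (k - j)
    with hf
  -- full sum
  have h1 := binom_j k (1 - x)
  have h2 := binom_one k (1 - x)
  rw [show (1 : ℝ) - (1 - x) = x by ring] at h1 h2
  have hfull : ∑ j ∈ Finset.range (k+1), f j = 1 - 2 * x := by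
    have : ∑ j ∈ Finset.range (k+1), f j
        = (2 / k) * ∑ j ∈ Finset.range (k+1), (j : ℝ) * (k.choose j : ℝ) * (1-x) ^ j * x ^ (k - j)
          - ∑ j ∈ Finset.range (k+1), (k.choose j : ℝ) * (1-x) ^ j * x ^ (k - j) := by
      rw [Finset.mul_sum, ← Finset.sum_sub_distrib]
      apply Finset.sum_congr rfl
      intro j _
      simp only [hf]; field_simp
    rw [this, h1, h2]
    field_simp
    ring
  -- split
  have hm1 : 1 ≤ m := by omega
  have hmk : m ≤ k + 1 := by omega
  have hsplit : ∑ j ∈ Finset.Ico 0 m, f j + ∑ j ∈ Finset.Ico m (k+1), f j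
      = ∑ j ∈ Finset.range (k+1), f j := by
    rw [Finset.range_eq_Ico]
    exact Finset.sum_Ico_consecutive f (Nat.zero_le m) hmk
  have hIcc : Finset.Icc m k = Finset.Ico m (k+1) := by
    rw [Finset.Ico_add_one_right_eq_Icc]
  -- low sum bound
  have hlow : ∑ j ∈ Finset.Ico 0 m, f j ≤ -(x ^ k) := by
    rw [Finset.sum_eq_sum_Ico_succ_bot (by omega : 0 < m) f]
    have hf0 : f 0 = -(x ^ k) := by simp [hf]
    rw [hf0]
    have : ∑ j ∈ Finset.Ico 1 m, f j ≤ 0 := by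
      apply Finset.sum_nonpos
      intro j hj
      simp only [Finset.mem_Ico] at hj
      have h2j : 2 * j ≤ k := by omega
      have hcoef : 2 * (j : ℝ) / k - 1 ≤ 0 := by
        have hjk : ((2 * j : ℕ) : ℝ) ≤ (k : ℝ) := Nat.cast_le.2 h2j
        push_cast at hjk
        have : 2 * (j : ℝ) / k ≤ 1 := by
          rw [div_le_one (by positivity)]; linarith
        linarith
      have : (0:ℝ) ≤ (k.choose j : ℝ) * (1 - x) ^ j * x ^ (k - j) := by positivity
      calc f j = (2 * (j : ℝ) / k - 1) * ((k.choose j : ℝ) * (1 - x) ^ j * x ^ (k - j)) := by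
            simp [hf]; ring
        _ ≤ 0 := mul_nonpos_of_nonpos_of_nonneg hcoef this
    linarith
  rw [hIcc]
  have : ∑ j ∈ Finset.Ico m (k+1), f j = (1 - 2*x) - ∑ j ∈ Finset.Ico 0 m, f j := by
    rw [← hfull]; linarith [hsplit]
  show x ^ k + 1 - 2 * x ≤ ∑ j ∈ Finset.Ico m (k+1), f j
  rw [this]; linarith

/-- The convergence-time bound: for `0 < x₀`, `h ≥ 1` with `h·x₀ < 1/2`,
`x₀(h−1)/p(h·x₀) ≤ x₀(h−1)/(l·((h x₀)^k + 1 − 2 h x₀))`. -/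
theorem stmt_17 (k l : ℕ) (hk : 2 ≤ k) (hl1 : 1 ≤ l) (hlk : l ≤ k)
    (x₀ h : ℝ) (hx₀ : 0 < x₀) (hx₀half : x₀ < 1 / 2) (hh : 1 ≤ h)
    (hhx : h * x₀ < 1 / 2) :
    x₀ * (h - 1) /
        (∑ j ∈ Finset.Icc ((k + 1) / 2) k,
          (l : ℝ) * (2 * (j : ℝ) / k - 1) * (k.choose j : ℝ)
            * (1 - h * x₀) ^ j * (h * x₀) ^ (k - j))
      ≤ x₀ * (h - 1) / ((l : ℝ) * ((h * x₀) ^ k + 1 - 2 * (h * x₀))) := by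
  have hx0 : 0 < h * x₀ := by positivity
  have hl0 : (0:ℝ) < l := by exact_mod_cast hl1
  have hT := tail_ge k hk (h * x₀) hx0 hhx
  have hS : ∑ j ∈ Finset.Icc ((k + 1) / 2) k,
      (l : ℝ) * (2 * (j : ℝ) / k - 1) * (k.choose j : ℝ)
        * (1 - h * x₀) ^ j * (h * x₀) ^ (k - j)
      = (l : ℝ) * ∑ j ∈ Finset.Icc ((k + 1) / 2) k,
          (2 * (j : ℝ) / k - 1) * (k.choose j : ℝ) * (1 - h * x₀) ^ j * (h * x₀) ^ (k - j) := by
    rw [Finset.mul_sum]; apply Finset.sum_congr rfl; intro j _; ring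
  have hD : (0:ℝ) < (l : ℝ) * ((h * x₀) ^ k + 1 - 2 * (h * x₀)) := by
    apply mul_pos hl0
    have : (0:ℝ) < (h * x₀) ^ k := by positivity
    linarith
  apply div_le_div_of_nonneg_left _ hD
  · rw [hS]
    exact mul_le_mul_of_nonneg_left hT hl0.le
  · nlinarith
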